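/- Let B(x₁,r) be an open ball in the Urysohn space 𝕌, let N ≥ 4 and let K satisfy (N − √(N² − 4N))/2 ≤ K ≤ (N + √(N² − 4N))/2. Suppose f is an injective partial function whose domain and range are finite subsets of B(x₁,r), with x₁ in the domain, f(x₁) = x₁, and f is K-bilipschitz and N-bigood (with respect to the center x₁ and radius r). Then for every x ∈ B(x₁,r) there exists y ∈ B(x₁,r) such that the extended function f ∪ {(x,y)} is K-bilipschitz and N-bigood. -/
import Mathlib


open Metric Set
open scoped Classical

/-- The Urysohn space: a complete separable metric space which is universal for
separable metric spaces and finitely ultrahomogeneous. -/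
def IsUrysohn (U : Type) [MetricSpace U] : Prop :=
  CompleteSpace U ∧ TopologicalSpace.SeparableSpace U ∧
  (∀ (Y : Type) [MetricSpace Y] [TopologicalSpace.SeparableSpace Y],
      ∃ f : Y → U, Isometry f) ∧
  (∀ (A : Set U) (f : U → U), A.Finite →
      (∀ u ∈ A, ∀ v ∈ A, dist (f u) (f v) = dist u v) →
      ∃ g : U ≃ᵢ U, ∀ u ∈ A, g u = f u)

/-- `f` is `K`-bilipschitz on the set `A`. -/
def BilipschitzOn {U : Type} [MetricSpace U] (K : ℝ) (f : U → U) (A : Set U) : Prop :=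
  ∀ u ∈ A, ∀ v ∈ A,
    (1 / K) * dist u v ≤ dist (f u) (f v) ∧ dist (f u) (f v) ≤ K * dist u v

/-- `f` is `N`-good on `A` with respect to the ball `B(x,r)`. -/
def NGoodOn {U : Type} [MetricSpace U] (N : ℝ) (x : U) (r : ℝ) (f : U → U) (A : Set U) : Prop :=
  ∀ y ∈ A, dist y (f y) ≤ (1 / N) * (r - dist y x)

/-- `f` is `N`-bigood on `A` with respect to the ball `B(x,r)`:
both `f` and its inverse are `N`-good. -/
def NBigoodOn {U : Type} [MetricSpace U] (N : ℝ) (x : U) (r : ℝ) (f : U → U) (A : Set U) : Prop :=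
  NGoodOn N x r f A ∧ ∀ y ∈ A, dist (f y) y ≤ (1 / N) * (r - dist (f y) x)

/-! ### Auxiliary material -/

/-- distance for the one-point extension -/
def extDist {U : Type} [MetricSpace U] (F : Set U) (s : U → ℝ) :
    (↥F ⊕ Unit) → (↥F ⊕ Unit) → ℝ
  | Sum.inl u, Sum.inl v => dist (u : U) (v : U)
  | Sum.inl u, Sum.inr _ => s u
  | Sum.inr _, Sum.inl v => s v
  | Sum.inr _, Sum.inr _ => 0

/-- The metric space obtained by adjoining one abstract point to `F` at
prescribed distances `s`. -/
def extMetric {U : Type} [MetricSpace U] (F : Set U) (s : U → ℝ)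
    (hlip : ∀ u ∈ F, ∀ v ∈ F, s u ≤ s v + dist u v)
    (hsum : ∀ u ∈ F, ∀ v ∈ F, dist u v ≤ s u + s v)
    (hpos : ∀ u ∈ F, 0 < s u) : MetricSpace (↥F ⊕ Unit) where
  dist := extDist F s
  dist_self := by rintro (u | u) <;> simp [extDist]
  dist_comm := by rintro (u | u) (v | v) <;> simp [extDist, dist_comm]
  dist_triangle := by
    rintro (u | u) (v | v) (w | w) <;> simp only [extDist]
    · exact dist_triangle (u : U) v w
    · have := hlip u u.2 v v.2
      linarith [this, dist_comm (u : U) (v : U)]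
    · exact hsum u u.2 w w.2
    · linarith [hpos u u.2]
    · linarith [hlip w w.2 v v.2, dist_comm (v : U) (w : U)]
    · linarith [hpos v v.2]
    · linarith [hpos w w.2]
    · norm_num
  eq_of_dist_eq_zero := by
    rintro (u | u) (v | v) h <;> simp only [extDist] at h
    · exact congrArg Sum.inl (Subtype.ext (by exact_mod_cast dist_eq_zero.1 h))
    · exact absurd h (ne_of_gt (hpos u u.2))
    · exact absurd h (ne_of_gt (hpos v v.2))
    · exact congrArg Sum.inr (Subsingleton.elim _ _)

/-- In the Urysohn space, any admissible (Katětov-type) one-point distance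
prescription over a finite set is realized by an actual point. -/
theorem exists_realizing_point (U : Type) [MetricSpace U] (hU : IsUrysohn U)
    (F : Set U) (hF : F.Finite) (hne : F.Nonempty) (s : U → ℝ)
    (hlip : ∀ u ∈ F, ∀ v ∈ F, s u ≤ s v + dist u v)
    (hsum : ∀ u ∈ F, ∀ v ∈ F, dist u v ≤ s u + s v)
    (hpos : ∀ u ∈ F, 0 ≤ s u) :
    ∃ y : U, ∀ u ∈ F, dist y u = s u := by
  clear hne
  by_cases hz : ∃ u₀ ∈ F, s u₀ = 0
  · obtain ⟨u₀, hu₀, hs0⟩ := hz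
    refine ⟨u₀, fun u hu => le_antisymm ?_ ?_⟩
    · calc dist u₀ u ≤ s u₀ + s u := hsum u₀ hu₀ u hu
        _ = s u := by rw [hs0, zero_add]
    · calc s u ≤ s u₀ + dist u u₀ := hlip u hu u₀ hu₀
        _ = dist u₀ u := by rw [hs0, zero_add, dist_comm]
  · push_neg at hz
    have hpos' : ∀ u ∈ F, 0 < s u := fun u hu =>
      lt_of_le_of_ne (hpos u hu) (Ne.symm (hz u hu))
    haveI : Finite ↥F := hF.to_subtype
    letI : MetricSpace (↥F ⊕ Unit) := extMetric F s hlip hsum hpos'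
    obtain ⟨φ, hφ⟩ := hU.2.2.1 (↥F ⊕ Unit)
    set A₀ : Set U := Set.range (fun u : ↥F => φ (Sum.inl u)) with hA₀
    have hA₀fin : A₀.Finite := Set.finite_range _
    set ψ : U → U := fun w =>
      if h : ∃ u : ↥F, φ (Sum.inl u) = w then ((Classical.choose h : ↥F) : U) else w with hψ
    have hψ_spec : ∀ (w : U) (h : ∃ u : ↥F, φ (Sum.inl u) = w),
        ψ w = ((Classical.choose h : ↥F) : U) := by
      intro w h; simp only [hψ, dif_pos h]
    have hψdist : ∀ w, (∃ u : ↥F, φ (Sum.inl u) = w) → ∀ w', (∃ u : ↥F, φ (Sum.inl u) = w') →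
        dist (ψ w) (ψ w') = dist w w' := by
      intro w h w' h'
      rw [hψ_spec w h, hψ_spec w' h']
      have e1 := Classical.choose_spec h
      have e2 := Classical.choose_spec h'
      have : dist ((Classical.choose h : ↥F) : U) ((Classical.choose h' : ↥F) : U)
          = dist (φ (Sum.inl (Classical.choose h))) (φ (Sum.inl (Classical.choose h'))) := by
        rw [hφ.dist_eq]
        rfl
      rw [this, e1, e2]
    have hpres : ∀ u ∈ A₀, ∀ v ∈ A₀, dist (ψ u) (ψ v) = dist u v := by
      rintro u ⟨a, rfl⟩ v ⟨b, rfl⟩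
      exact hψdist _ ⟨a, rfl⟩ _ ⟨b, rfl⟩
    obtain ⟨g, hg⟩ := hU.2.2.2 A₀ ψ hA₀fin hpres
    refine ⟨g (φ (Sum.inr ())), fun u hu => ?_⟩
    have hmem : φ (Sum.inl ⟨u, hu⟩) ∈ A₀ := ⟨⟨u, hu⟩, rfl⟩
    have hex : ∃ v : ↥F, φ (Sum.inl v) = φ (Sum.inl ⟨u, hu⟩) := ⟨⟨u, hu⟩, rfl⟩
    have hgw : g (φ (Sum.inl ⟨u, hu⟩)) = ((Classical.choose hex : ↥F) : U) := by
      rw [hg _ hmem, hψ_spec _ hex]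
    have hchoose : ((Classical.choose hex : ↥F) : U) = u := by
      have e := Classical.choose_spec hex
      have : dist ((Classical.choose hex : ↥F) : U) u
          = dist (φ (Sum.inl (Classical.choose hex))) (φ (Sum.inl (⟨u, hu⟩ : ↥F))) := by
        rw [hφ.dist_eq]; rfl
      rw [e, dist_self] at this
      exact dist_eq_zero.1 this
    have key : dist (g (φ (Sum.inr ()))) (g (φ (Sum.inl ⟨u, hu⟩))) = s u := by
      rw [g.dist_eq, hφ.dist_eq]
      rfl
    calc dist (g (φ (Sum.inr ()))) u
        = dist (g (φ (Sum.inr ()))) (g (φ (Sum.inl ⟨u, hu⟩))) := by rw [hgw, hchoose]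
      _ = s u := key

section KN

variable {N K : ℝ}

theorem key_quad (hN : 4 ≤ N)
    (hK₁ : (N - Real.sqrt (N ^ 2 - 4 * N)) / 2 ≤ K)
    (hK₂ : K ≤ (N + Real.sqrt (N ^ 2 - 4 * N)) / 2) :
    K ^ 2 - N * K + N ≤ 0 := by
  have hnn : (0:ℝ) ≤ N ^ 2 - 4 * N := by nlinarith
  have hsq : Real.sqrt (N ^ 2 - 4 * N) ^ 2 = N ^ 2 - 4 * N := Real.sq_sqrt hnn
  have h2a : 0 ≤ Real.sqrt (N ^ 2 - 4 * N) - (2 * K - N) := by linarith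
  have h2b : 0 ≤ Real.sqrt (N ^ 2 - 4 * N) + (2 * K - N) := by linarith
  nlinarith [mul_nonneg h2a h2b, hsq]

theorem key_Kpos (hN : 4 ≤ N) (hq : K ^ 2 - N * K + N ≤ 0) : 0 < K := by
  by_contra h
  push_neg at h
  nlinarith [sq_nonneg K, mul_nonpos_of_nonneg_of_nonpos (by linarith : (0:ℝ) ≤ N) h]

theorem key_K1 (hN : 4 ≤ N) (hq : K ^ 2 - N * K + N ≤ 0) : 1 < K := by
  have hKpos := key_Kpos hN hq
  by_contra h
  push_neg at h
  nlinarith [mul_le_mul_of_nonneg_left h (by linarith : (0:ℝ) ≤ N), mul_pos hKpos hKpos]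

theorem key_KN (hN : 4 ≤ N) (hq : K ^ 2 - N * K + N ≤ 0) : N ≤ K * (N - 1) := by
  have h1 := key_K1 hN hq
  have h0 := key_Kpos hN hq
  nlinarith [mul_le_mul_of_nonneg_left (le_of_lt h1) (le_of_lt h0)]

end KN

set_option maxHeartbeats 1600000 in
/-- One-point extension of a finite `(K,N)`-compliant function
(Lemma 2.4 of the paper). -/
theorem one_point_bilipschitz_extension (U : Type) [MetricSpace U] (hU : IsUrysohn U)
    (x₁ : U) (r : ℝ) (hr : 0 < r) (N K : ℝ) (hN : 4 ≤ N)
    (hK₁ : (N - Real.sqrt (N ^ 2 - 4 * N)) / 2 ≤ K)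
    (hK₂ : K ≤ (N + Real.sqrt (N ^ 2 - 4 * N)) / 2)
    (A : Set U) (hAfin : A.Finite) (hx₁A : x₁ ∈ A) (hAsub : A ⊆ ball x₁ r)
    (f : U → U) (hmap : MapsTo f A (ball x₁ r)) (hinj : InjOn f A)
    (hfx : f x₁ = x₁)
    (hbil : BilipschitzOn K f A) (hgood : NBigoodOn N x₁ r f A) :
    ∀ x ∈ ball x₁ r, ∃ y ∈ ball x₁ r,
      BilipschitzOn K (Function.update f x y) (insert x A) ∧
      NBigoodOn N x₁ r (Function.update f x y) (insert x A) := by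
  intro x hx
  by_cases hxA : x ∈ A
  · refine ⟨f x, hmap hxA, ?_, ?_⟩ <;>
      rw [Set.insert_eq_self.2 hxA, Function.update_eq_self x f]
    exacts [hbil, hgood]
  -- the interesting case: `x ∉ A`
  have hNpos : (0:ℝ) < N := by linarith
  have hq := key_quad hN hK₁ hK₂
  have hKpos := key_Kpos hN hq
  have hK1 := key_K1 hN hq
  have hKN := key_KN hN hq
  have hd₁r : dist x x₁ < r := mem_ball.1 hx
  have hgood1' : ∀ a ∈ A, dist a (f a) * N ≤ r - dist a x₁ := by
    intro a ha
    have h := hgood.1 a ha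
    rw [one_div_mul_eq_div] at h
    exact (le_div_iff₀ hNpos).1 h
  have hgood2' : ∀ a ∈ A, dist (f a) a * N ≤ r - dist (f a) x₁ := by
    intro a ha
    have h := hgood.2 a ha
    rw [one_div_mul_eq_div] at h
    exact (le_div_iff₀ hNpos).1 h
  have hK1N : 1 ≤ N * (K - 1) := by
    nlinarith [hq, mul_le_mul_of_nonneg_left (le_of_lt hK1) (le_of_lt hKpos)]
  have hKinvN : 1/K + 1/N ≤ 1 := by
    rw [div_add_div _ _ (ne_of_gt hKpos) (ne_of_gt hNpos), div_le_one (by positivity)]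
    nlinarith [hKN]
  have hKinvK : 1/K ≤ K := by
    rw [div_le_iff₀ hKpos]; nlinarith [hK1]
  have hNKdiv : N * (1/K) ≤ N - K := by
    rw [mul_one_div, div_le_iff₀ hKpos]; nlinarith [hq]
  set T : Finset U := hAfin.toFinset with hT
  have hTne : T.Nonempty := ⟨x₁, hAfin.mem_toFinset.2 hx₁A⟩
  have hmemT : ∀ a, a ∈ T ↔ a ∈ A := fun a => hAfin.mem_toFinset
  obtain ⟨c, hcdef⟩ : ∃ c : ℝ, c = max 0 (T.sup' hTne fun a =>
    max (dist x (f a) - K * dist x a) (1/K * dist x a - dist x (f a))) := ⟨_, rfl⟩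
  have hc0 : 0 ≤ c := by rw [hcdef]; exact le_max_left _ _
  have hcp1 : ∀ a ∈ A, dist x (f a) - K * dist x a ≤ c := by
    intro a ha
    rw [hcdef]
    exact le_trans (le_trans (le_max_left _ _)
      (Finset.le_sup' (f := fun a => max (dist x (f a) - K * dist x a)
        (1/K * dist x a - dist x (f a))) ((hmemT a).2 ha))) (le_max_right _ _)
  have hcp2 : ∀ a ∈ A, 1/K * dist x a - dist x (f a) ≤ c := by
    intro a ha
    rw [hcdef]
    exact le_trans (le_trans (le_max_right _ _)
      (Finset.le_sup' (f := fun a => max (dist x (f a) - K * dist x a)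
        (1/K * dist x a - dist x (f a))) ((hmemT a).2 ha))) (le_max_right _ _)
  have hcδ : c ≤ 1/N * (r - dist x x₁) := by
    have hδ0 : 0 ≤ 1/N * (r - dist x x₁) :=
      mul_nonneg (by positivity) (by linarith)
    rw [hcdef]
    refine max_le hδ0 (Finset.sup'_le _ _ fun a haT => ?_)
    have ha : a ∈ A := (hmemT a).1 haT
    refine max_le ?_ ?_
    · rw [one_div_mul_eq_div, le_div_iff₀ hNpos]
      linarith [hgood1' a ha, dist_triangle x a x₁,
        mul_nonneg (by linarith [hK1N] : (0:ℝ) ≤ N * (K - 1) - 1)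
          (dist_nonneg : (0:ℝ) ≤ dist x a),
        mul_le_mul_of_nonneg_right (dist_triangle x a (f a)) (le_of_lt hNpos)]
    · have h5 : dist x a ≤ dist x (f a) + dist (f a) a := dist_triangle x (f a) a
      have hcm : dist (f a) a = dist a (f a) := dist_comm _ _
      have hg := hgood.1 a ha
      have hprod1 : 1/N * dist x x₁ ≤ 1/N * (dist x a + dist a x₁) :=
        mul_le_mul_of_nonneg_left (dist_triangle x a x₁) (by positivity)
      have hprod2 : 0 ≤ (1 - 1/K - 1/N) * dist x a :=
        mul_nonneg (by linarith [hKinvN]) dist_nonneg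
      nlinarith [h5, hcm, hg, hprod1, hprod2]
  -- the prescribed distance function
  obtain ⟨sf, hsf⟩ : ∃ sf : U → ℝ, sf = fun u =>
    min (c + dist u x) (T.inf' hTne fun a => K * dist x a + dist u (f a)) := ⟨_, rfl⟩
  have hsle1 : ∀ u, sf u ≤ c + dist u x := by
    intro u; rw [hsf]; exact min_le_left _ _
  have hsle2 : ∀ u, ∀ a ∈ A, sf u ≤ K * dist x a + dist u (f a) := by
    intro u a ha
    rw [hsf]
    exact le_trans (min_le_right _ _)
      (Finset.inf'_le (f := fun a => K * dist x a + dist u (f a)) ((hmemT a).2 ha))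
  have hattain : ∀ u, sf u = c + dist u x ∨
      ∃ a ∈ A, sf u = K * dist x a + dist u (f a) := by
    intro u
    rcases le_total (c + dist u x) (T.inf' hTne fun a => K * dist x a + dist u (f a)) with h | h
    · left
      simp only [hsf]
      exact min_eq_left h
    · right
      obtain ⟨a, haT, hinf⟩ := Finset.exists_mem_eq_inf' hTne
        (fun a => K * dist x a + dist u (f a))
      refine ⟨a, (hmemT a).1 haT, ?_⟩
      simp only [hsf]
      rw [min_eq_right h, hinf]
  have hlip' : ∀ u v : U, sf u ≤ sf v + dist u v := by
    intro u v
    rcases hattain v with h | ⟨a, ha, h⟩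
    · calc sf u ≤ c + dist u x := hsle1 u
        _ ≤ c + (dist v x + dist u v) := by linarith [dist_triangle u v x]
        _ = (c + dist v x) + dist u v := by ring
        _ = sf v + dist u v := by rw [h]
    · calc sf u ≤ K * dist x a + dist u (f a) := hsle2 u a ha
        _ ≤ K * dist x a + (dist v (f a) + dist u v) := by linarith [dist_triangle u v (f a)]
        _ = (K * dist x a + dist v (f a)) + dist u v := by ring
        _ = sf v + dist u v := by rw [h]
  have hsum' : ∀ u v : U, dist u v ≤ sf u + sf v := by
    intro u v
    rcases hattain u with h1 | ⟨a, ha, h1⟩ <;> rcases hattain v with h2 | ⟨b, hb, h2⟩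
    · rw [h1, h2]
      linarith [dist_triangle u x v, dist_comm v x, hc0]
    · rw [h1, h2]
      linarith [dist_triangle4 u x (f b) v, hcp1 b hb, dist_comm v (f b), hc0]
    · rw [h1, h2]
      linarith [dist_triangle4 u (f a) x v, hcp1 a ha, dist_comm u (f a),
        dist_comm v x, dist_comm x (f a), hc0]
    · rw [h1, h2]
      have htr : dist a b ≤ dist x a + dist x b := by
        rw [dist_comm x a]; exact dist_triangle a x b
      linarith [dist_triangle4 u (f a) (f b) v, (hbil a ha b hb).2,
        mul_le_mul_of_nonneg_left htr (le_of_lt hKpos),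
        dist_comm u (f a), dist_comm v (f b)]
  have hpos0 : ∀ u : U, 0 ≤ sf u := by
    intro u
    rcases hattain u with h | ⟨a, _, h⟩
    · rw [h]; exact add_nonneg hc0 dist_nonneg
    · rw [h]; exact add_nonneg (mul_nonneg (le_of_lt hKpos) dist_nonneg) dist_nonneg
  obtain ⟨y, hy⟩ := exists_realizing_point U hU (insert x (f '' A))
    ((hAfin.image f).insert x) ⟨x, mem_insert _ _⟩ sf
    (fun u _ v _ => hlip' u v) (fun u _ v _ => hsum' u v) (fun u _ => hpos0 u)
  have hyx : dist y x = sf x := hy x (mem_insert _ _)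
  have hyfa : ∀ a ∈ A, dist y (f a) = sf (f a) := fun a ha =>
    hy (f a) (mem_insert_of_mem _ ⟨a, ha, rfl⟩)
  have hyx₁ : dist y x₁ = sf x₁ := hy x₁ (mem_insert_of_mem _ ⟨x₁, hx₁A, hfx⟩)
  have hsxc : sf x ≤ c := by
    have := hsle1 x; rwa [dist_self, add_zero] at this
  have hup : ∀ a ∈ A, dist y (f a) ≤ K * dist x a := by
    intro a ha
    rw [hyfa a ha]
    have := hsle2 (f a) a ha
    rwa [dist_self, add_zero] at this
  have hlow : ∀ a ∈ A, 1/K * dist x a ≤ dist y (f a) := by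
    intro a ha
    rw [hyfa a ha]
    rcases hattain (f a) with h | ⟨b, hb, h⟩
    · rw [h]
      linarith [hcp2 a ha, dist_comm (f a) x]
    · rw [h]
      have h1 : 1/K * dist b a ≤ dist (f a) (f b) := by
        rw [dist_comm b a]; exact (hbil a ha b hb).1
      have h3 : 1/K * dist x a ≤ 1/K * (dist x b + dist b a) :=
        mul_le_mul_of_nonneg_left (dist_triangle x b a) (by positivity)
      have h4 : (0:ℝ) ≤ (K - 1/K) * dist x b :=
        mul_nonneg (by linarith [hKinvK]) dist_nonneg
      nlinarith [h1, h3, h4]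
  -- the second goodness inequality, in cleared form
  have hG2 : N * dist y x + dist y x₁ ≤ r := by
    rcases le_or_gt (T.sup' hTne fun a =>
      max (dist x (f a) - K * dist x a) (1/K * dist x a - dist x (f a))) 0 with h | h
    · have hc0' : c = 0 := by rw [hcdef]; exact max_eq_left h
      have h1 : dist y x ≤ 0 := by rw [hyx]; rw [hc0'] at hsxc; exact hsxc
      have h2 : dist y x₁ ≤ dist y x + dist x x₁ := dist_triangle y x x₁
      linarith [mul_le_mul_of_nonneg_left h1 (le_of_lt hNpos), dist_nonneg (x := y) (y := x)]
    · obtain ⟨a0, haT, hsup⟩ := Finset.exists_mem_eq_sup' hTne (fun a =>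
        max (dist x (f a) - K * dist x a) (1/K * dist x a - dist x (f a)))
      have ha0 : a0 ∈ A := (hmemT a0).1 haT
      have hceq : c = max (dist x (f a0) - K * dist x a0)
          (1/K * dist x a0 - dist x (f a0)) := by
        rw [hcdef, max_eq_right (le_of_lt h), hsup]
      have hdyxc : dist y x ≤ c := by rw [hyx]; exact hsxc
      have hsx₁ : dist y x₁ ≤ K * dist x a0 + dist x₁ (f a0) := by
        rw [hyx₁]; exact hsle2 x₁ a0 ha0
      have hrho : dist x₁ (f a0) = dist (f a0) x₁ := dist_comm _ _
      have hgd : dist a0 (f a0) * N ≤ r - dist (f a0) x₁ := by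
        rw [dist_comm a0 (f a0)]; exact hgood2' a0 ha0
      rcases le_total (1/K * dist x a0 - dist x (f a0))
        (dist x (f a0) - K * dist x a0) with hm | hm
      · -- c = dist x (f a0) - K * dist x a0
        have hce : c = dist x (f a0) - K * dist x a0 := by rw [hceq]; exact max_eq_left hm
        have hNc : N * dist y x ≤ N * (dist x (f a0) - K * dist x a0) := by
          rw [← hce]
          exact mul_le_mul_of_nonneg_left hdyxc (le_of_lt hNpos)
        have htr : dist x (f a0) ≤ dist x a0 + dist a0 (f a0) := dist_triangle _ _ _
        have htrN : N * dist x (f a0) ≤ N * (dist x a0 + dist a0 (f a0)) :=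
          mul_le_mul_of_nonneg_left htr (le_of_lt hNpos)
        have heta : (0:ℝ) ≤ (K * (N - 1) - N) * dist x a0 :=
          mul_nonneg (by linarith [hKN]) dist_nonneg
        nlinarith [hNc, hsx₁, hrho, hgd, htrN, heta]
      · -- c = 1/K * dist x a0 - dist x (f a0)
        have hce : c = 1/K * dist x a0 - dist x (f a0) := by rw [hceq]; exact max_eq_right hm
        have hNc : N * dist y x ≤ N * (1/K * dist x a0 - dist x (f a0)) := by
          rw [← hce]
          exact mul_le_mul_of_nonneg_left hdyxc (le_of_lt hNpos)
        have hNk : N * (1/K) * dist x a0 ≤ (N - K) * dist x a0 :=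
          mul_le_mul_of_nonneg_right hNKdiv dist_nonneg
        have htr : dist x a0 ≤ dist x (f a0) + dist (f a0) a0 := dist_triangle _ _ _
        have htrN : N * dist x a0 ≤ N * (dist x (f a0) + dist (f a0) a0) :=
          mul_le_mul_of_nonneg_left htr (le_of_lt hNpos)
        have hgd2 : dist (f a0) a0 * N ≤ r - dist (f a0) x₁ := hgood2' a0 ha0
        nlinarith [hNc, hsx₁, hrho, hgd2, htrN, hNk]
  have hball : y ∈ ball x₁ r := by
    rw [mem_ball]
    have h1 : dist y x₁ ≤ c + dist x₁ x := by rw [hyx₁]; exact hsle1 x₁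
    have hlt1 : 1/N < 1 := by rw [div_lt_one hNpos]; linarith
    have h2 := mul_lt_mul_of_pos_right hlt1 (by linarith : (0:ℝ) < r - dist x x₁)
    rw [one_mul] at h2
    linarith [dist_comm x₁ x, hcδ]
  refine ⟨y, hball, ?_, ?_, ?_⟩
  · -- bilipschitz
    intro u hu v hv
    rcases hu with rfl | hu <;> rcases hv with rfl | hv
    · rw [Function.update_self, dist_self, dist_self]
      simp
    · have hvx : v ≠ u := fun h => hxA (h ▸ hv)
      rw [Function.update_self, Function.update_of_ne hvx y f]
      exact ⟨hlow v hv, hup v hv⟩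
    · have hux : u ≠ v := fun h => hxA (h ▸ hu)
      rw [Function.update_self, Function.update_of_ne hux y f,
        dist_comm (f u) y, dist_comm u v]
      exact ⟨hlow u hu, hup u hu⟩
    · have hux : u ≠ x := fun h => hxA (h ▸ hu)
      have hvx : v ≠ x := fun h => hxA (h ▸ hv)
      rw [Function.update_of_ne hux y f, Function.update_of_ne hvx y f]
      exact hbil u hu v hv
  · -- N-good
    intro z hz
    rcases hz with rfl | hz
    · rw [Function.update_self]
      have hxy : dist z y = sf z := by rw [dist_comm]; exact hyx
      linarith [hxy, hsxc, hcδ]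
    · have hzx : z ≠ x := fun h => hxA (h ▸ hz)
      rw [Function.update_of_ne hzx y f]
      exact hgood.1 z hz
  · -- N-good for the inverse
    intro z hz
    rcases hz with rfl | hz
    · rw [Function.update_self, one_div_mul_eq_div, le_div_iff₀ hNpos]
      linarith [hG2]
    · have hzx : z ≠ x := fun h => hxA (h ▸ hz)
      rw [Function.update_of_ne hzx y f]
      exact hgood.2 z hz
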